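/- Let ε, a, b ∈ ℂ and x ∈ ℂ with x ≠ 0. Let u : ℂ → ℂ be twice differentiable at ix with u(ix) ≠ 0, and suppose u''(ix) = u'(ix)²/u(ix) − u'(ix)/(ix) + (−8εu(ix)² + 2ab)/(ix) + b²/u(ix). Then the function v(z) := i·u(iz) satisfies v''(x) = v'(x)²/v(x) − v'(x)/x + (−8εv(x)² + 2(−a)b)/x + b²/v(x). In other words, the substitution u ↦ iu, x ↦ ix takes solutions of the Painlevé-III (D7) equation in Kitaev–Vartanian form with parameters (ε, a, b) to solutions with parameters (ε, −a, b). -/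

import Mathlib

open Complex

lemma deriv_comp_I_mul (f : ℂ → ℂ) (z : ℂ) :
    deriv (fun w => f (I * w)) z = I * deriv f (I * z) := by
  by_cases hf : DifferentiableAt ℂ f (I * z)
  · have hinner : HasDerivAt (fun w : ℂ => I * w) I z := by
      simpa using (hasDerivAt_id z).const_mul I
    have h1 : HasDerivAt (fun w => f (I * w)) (deriv f (I * z) * I) z :=
      (hf.hasDerivAt.comp z hinner)
    rw [h1.deriv]; ring
  · have h2 : ¬ DifferentiableAt ℂ (fun w => f (I * w)) z := by
      intro hc
      apply hf
      have hc2 : DifferentiableAt ℂ ((fun w => f (I * w)) ∘ (fun w => -I * w)) (I * z) := by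
        refine DifferentiableAt.comp _ ?_ (differentiableAt_id.const_mul (-I))
        simpa [← mul_assoc, I_mul_I] using hc
      have heq : ((fun w => f (I * w)) ∘ (fun w => -I * w)) = f := by
        funext w; simp [Function.comp, ← mul_assoc, I_mul_I]
      rwa [heq] at hc2
    rw [deriv_zero_of_not_differentiableAt hf, deriv_zero_of_not_differentiableAt h2, mul_zero]

/-- The substitution `u ↦ iu`, `x ↦ ix` takes solutions of the Painlevé-III (D7)
equation in Kitaev–Vartanian form with parameters `(ε, a, b)` to solutions with
parameters `(ε, −a, b)`. -/
theorem stmt_2 (ε a b x : ℂ) (hx : x ≠ 0) (u : ℂ → ℂ)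
    (hu : DifferentiableAt ℂ u (I * x))
    (hu' : DifferentiableAt ℂ (deriv u) (I * x))
    (hux : u (I * x) ≠ 0)
    (h : deriv (deriv u) (I * x) =
      (deriv u (I * x)) ^ 2 / u (I * x) - deriv u (I * x) / (I * x)
        + (-8 * ε * (u (I * x)) ^ 2 + 2 * a * b) / (I * x) + b ^ 2 / u (I * x)) :
    deriv (deriv fun z => I * u (I * z)) x =
      (deriv (fun z => I * u (I * z)) x) ^ 2 / (I * u (I * x))
        - deriv (fun z => I * u (I * z)) x / x
        + (-8 * ε * (I * u (I * x)) ^ 2 + 2 * (-a) * b) / x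
        + b ^ 2 / (I * u (I * x)) := by
  have key : (deriv fun z => I * u (I * z)) = fun z => I * (I * deriv u (I * z)) := by
    funext z
    rw [deriv_const_mul_field, deriv_comp_I_mul]
  have d1 : deriv (fun z => I * u (I * z)) x = I * (I * deriv u (I * x)) := by
    rw [key]
  have d2 : deriv (deriv fun z => I * u (I * z)) x
      = I * (I * (I * deriv (deriv u) (I * x))) := by
    rw [key]
    rw [deriv_const_mul_field, deriv_const_mul_field, deriv_comp_I_mul]
  rw [d2, d1, h]
  have hIx : I * x ≠ 0 := mul_ne_zero I_ne_zero hx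
  have h3 : (I : ℂ) ^ 3 = -I := by simp [pow_succ, I_sq]
  have h4 : (I : ℂ) ^ 4 = 1 := by simp [pow_succ, I_sq]
  have h5 : (I : ℂ) ^ 5 = I := by simp [pow_succ, I_sq]
  have h6 : (I : ℂ) ^ 6 = -1 := by simp [pow_succ, I_sq]
  have h7 : (I : ℂ) ^ 7 = -I := by simp [pow_succ, I_sq]
  have hi2 : (I : ℂ)⁻¹ ^ 2 = -1 := by simp [inv_I, I_sq]
  field_simp [I_ne_zero]
  ring_nf
  simp only [h3, h4, h5, h6, h7, I_sq, hi2]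
  ring
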